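/- Let F be a d-regular graph on [n] and let H ⊆ F be a subgraph with ℓ edges, x non-isolated vertices, and c connected components (excluding isolated vertices). Then the number of graphs F' on [n] isomorphic to F with H ⊆ F' is at most (n−x+c)! · (x/c)^c · d^ℓ / |Aut(F)|. -/

import Mathlib

open SimpleGraph

/-- The connected components of `J` that contain a non-isolated vertex. -/
def nontrivialComponents {V : Type*} (J : SimpleGraph V) : Set J.ConnectedComponent :=
  {C | ∃ v ∈ J.support, J.connectedComponentMk v = C}

/-- `G` is `d`-regular. -/
def IsRegularGraph {V : Type*} (G : SimpleGraph V) (d : ℕ) : Prop :=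
  ∀ v, (G.neighborSet v).ncard = d

open List Finset

noncomputable def equivFinOfNatCardEq {α : Type*} [Finite α] {m : ℕ} (h : Nat.card α = m) :
    α ≃ Fin m := by
  have : Fintype α := Fintype.ofFinite α
  exact Fintype.equivFinOfCardEq (by rwa [Nat.card_eq_fintype_card] at h)

section Enc
variable {V : Type*} [Fintype V] [DecidableEq V]

lemma ncard_compl_set (s : Set V) : sᶜ.ncard = Fintype.card V - s.ncard := by
  have h := Set.ncard_add_ncard_compl s (Set.toFinite s) (Set.toFinite sᶜ)
  rw [Nat.card_eq_fintype_card] at h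
  omega

open scoped Classical in
noncomputable def setEnc (s : Set V) (v : V) : ℕ :=
  if h : v ∈ sᶜ then (equivFinOfNatCardEq (ncard_compl_set s) ⟨v, h⟩).val else 0

lemma setEnc_lt {s : Set V} {v : V} (h : v ∉ s) : setEnc s v < Fintype.card V - s.ncard := by
  classical
  rw [setEnc, dif_pos (show v ∈ sᶜ by simpa using h)]
  exact (equivFinOfNatCardEq (ncard_compl_set s) ⟨v, by simpa using h⟩).isLt

lemma setEnc_inj {s : Set V} {v v' : V} (h : v ∉ s) (h' : v' ∉ s)
    (he : setEnc s v = setEnc s v') : v = v' := by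
  classical
  rw [setEnc, dif_pos (show v ∈ sᶜ by simpa using h), setEnc,
    dif_pos (show v' ∈ sᶜ by simpa using h')] at he
  have := (equivFinOfNatCardEq (ncard_compl_set s)).injective (Fin.val_injective he)
  exact congrArg Subtype.val this

open scoped Classical in
noncomputable def nbEnc (F : SimpleGraph V) {d : ℕ} (hreg : IsRegularGraph F d) (w v : V) : ℕ :=
  if h : v ∈ F.neighborSet w then
    (equivFinOfNatCardEq (show Nat.card ↥(F.neighborSet w) = d from by
      rw [Nat.card_coe_set_eq]; exact hreg w) ⟨v, h⟩).val
  else 0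

lemma nbEnc_lt {F : SimpleGraph V} {d : ℕ} (hreg : IsRegularGraph F d) {w v : V}
    (h : v ∈ F.neighborSet w) : nbEnc F hreg w v < d := by
  classical
  rw [nbEnc, dif_pos h]
  exact (equivFinOfNatCardEq (show Nat.card ↥(F.neighborSet w) = d from by
    rw [Nat.card_coe_set_eq]; exact hreg w) ⟨v, h⟩).isLt

lemma nbEnc_inj {F : SimpleGraph V} {d : ℕ} (hreg : IsRegularGraph F d) {w v v' : V}
    (h : v ∈ F.neighborSet w) (h' : v' ∈ F.neighborSet w)
    (he : nbEnc F hreg w v = nbEnc F hreg w v') : v = v' := by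
  classical
  rw [nbEnc, dif_pos h, nbEnc, dif_pos h'] at he
  have := (equivFinOfNatCardEq (show Nat.card ↥(F.neighborSet w) = d by
    rw [Nat.card_coe_set_eq]; exact hreg w)).injective (Fin.val_injective he)
  exact congrArg Subtype.val this

end Enc

section Explore
variable {V : Type*}

/-- every index (other than 0) has an earlier `H`-neighbor in the list -/
def GoodIdx (H : SimpleGraph V) (l : List V) : Prop :=
  ∀ i, 0 < i → i < l.length →
    ∃ j, j < i ∧ ∃ u w, l[j]? = some u ∧ l[i]? = some w ∧ H.Adj u w

lemma walk_cross {H : SimpleGraph V} (P : Set V) :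
    ∀ {u w : V}, H.Walk u w → u ∈ P → w ∉ P → ∃ a ∈ P, ∃ b, b ∉ P ∧ H.Adj a b := by
  intro u w p
  induction p with
  | nil => intro h1 h2; exact absurd h1 h2
  | @cons u v w h q ih =>
    intro hu hw
    by_cases hm : v ∈ P
    · exact ih hm hw
    · exact ⟨u, hu, v, hm, h⟩

lemma exists_component_list [Fintype V] [DecidableEq V] (H : SimpleGraph V)
    (C : H.ConnectedComponent) (hC : C ∈ nontrivialComponents H) :
    ∃ l : List V, l ≠ [] ∧ l.Nodup ∧ GoodIdx H l ∧
      ∀ v, v ∈ l ↔ (H.connectedComponentMk v = C ∧ v ∈ H.support) := by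
  obtain ⟨v0, hv0s, hv0c⟩ := hC
  by_contra hno
  push_neg at hno
  set P : List V → Prop := fun l => l ≠ [] ∧ l.Nodup ∧ GoodIdx H l ∧
      ∀ v ∈ l, H.connectedComponentMk v = C ∧ v ∈ H.support with hP
  have step : ∀ l, P l → ∃ l', P l' ∧ l'.length = l.length + 1 := by
    intro l hl
    obtain ⟨hne, hnd, hgd, hmem⟩ := hl
    -- find a missing vertex of the component
    obtain ⟨v1, hv1⟩ := hno l hne hnd hgd
    have hmiss : ∃ w, (H.connectedComponentMk w = C ∧ w ∈ H.support) ∧ w ∉ l := by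
      rcases hv1 with ⟨hmem1, hbad⟩ | ⟨hnm, hC1, hs1⟩
      · obtain ⟨hC1, hs1⟩ := hmem v1 hmem1
        exact absurd hs1 (hbad hC1)
      · exact ⟨v1, ⟨hC1, hs1⟩, hnm⟩
    obtain ⟨w, ⟨hwC, hws⟩, hwl⟩ := hmiss
    -- head of l
    have hu : l.head hne ∈ l := List.head_mem hne
    have huC := (hmem _ hu).1
    have hreach : H.Reachable (l.head hne) w :=
      SimpleGraph.ConnectedComponent.exact (huC.trans hwC.symm)
    obtain ⟨a, ha, b, hb, hab⟩ := walk_cross {v | v ∈ l} hreach.some hu hwl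
    refine ⟨l ++ [b], ⟨by simp, ?_, ?_, ?_⟩, by simp⟩
    · rw [List.nodup_append]
      exact ⟨hnd, List.nodup_singleton b, by intro a' ha' b' hb' hab'; simp at hb'; subst hb'; subst hab'; exact hb ha'⟩
    · intro i h0 hil
      rw [List.length_append, List.length_singleton] at hil
      rcases lt_or_ge i l.length with hlt | hge
      · obtain ⟨j, hj, u', w', h1, h2, h3⟩ := hgd i h0 hlt
        exact ⟨j, hj, u', w', by rwa [List.getElem?_append_left (hj.trans hlt)],
          by rwa [List.getElem?_append_left hlt], h3⟩
      · have hi : i = l.length := by omega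
        subst hi
        obtain ⟨⟨ja, hja⟩, hga⟩ := List.mem_iff_get.mp ha
        refine ⟨ja, hja, a, b, ?_, ?_, hab⟩
        · rw [List.getElem?_append_left hja, List.getElem?_eq_getElem hja]; exact congrArg some hga
        · rw [List.getElem?_append_right le_rfl]
          simp
    · intro v hv
      rcases List.mem_append.mp hv with hv | hv
      · exact hmem v hv
      · have hv' : v = b := by simpa using hv
        subst hv'
        refine ⟨?_, ?_⟩
        · have h2 : H.connectedComponentMk a = H.connectedComponentMk v :=
            SimpleGraph.ConnectedComponent.sound hab.reachable
          rw [← h2]; exact (hmem a ha).1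
        · exact ⟨a, hab.symm⟩
  have all : ∀ k, ∃ l, P l ∧ l.length = k + 1 := by
    intro k
    induction k with
    | zero =>
      refine ⟨[v0], ⟨by simp, by simp, ?_, ?_⟩, rfl⟩
      · intro i hi hil; simp at hil; omega
      · intro v hv; simp at hv; subst hv; exact ⟨hv0c, hv0s⟩
    | succ k ih =>
      obtain ⟨l, hl, hlen⟩ := ih
      obtain ⟨l', hl', hlen'⟩ := step l hl
      exact ⟨l', hl', by omega⟩
  obtain ⟨l, hl, hlen⟩ := all (Fintype.card V)
  have := hl.2.1.length_le_card
  omega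

end Explore


section Qsum

/-- partial sums of block lengths -/
def qsum {V : Type*} (bs : List (List V)) (k : ℕ) : ℕ :=
  ∑ j ∈ Finset.range k, (bs.map List.length).getD j 0

lemma qsum_zero {V : Type*} (bs : List (List V)) : qsum bs 0 = 0 := by simp [qsum]

lemma qsum_cons {V : Type*} (b : List V) (bs : List (List V)) (k : ℕ) :
    qsum (b :: bs) (k + 1) = b.length + qsum bs k := by
  rw [qsum, Finset.sum_range_succ']
  simp [qsum, List.getD_cons_succ, add_comm]

lemma sum_getD (l : List ℕ) : ∑ j ∈ Finset.range l.length, l.getD j 0 = l.sum := by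
  induction l with
  | nil => simp
  | cons a l ih =>
    rw [List.length_cons, Finset.sum_range_succ']
    simp only [List.getD_cons_succ, List.getD_cons_zero, List.sum_cons, ih, add_comm]

lemma qsum_length {V : Type*} (bs : List (List V)) : qsum bs bs.length = bs.flatten.length := by
  rw [List.length_flatten, qsum]
  have : (bs.map List.length).length = bs.length := by simp
  rw [← this, sum_getD]

lemma qsum_strict_mono {V : Type*} (bs : List (List V)) (hne : ∀ b ∈ bs, b ≠ [])
    {k1 k2 : ℕ} (h12 : k1 < k2) (h2 : k2 ≤ bs.length) : qsum bs k1 < qsum bs k2 := by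
  have hk1 : k1 < bs.length := lt_of_lt_of_le h12 h2
  rw [qsum, qsum]
  refine Finset.sum_lt_sum_of_subset (Finset.range_subset_range.mpr h12.le)
    (Finset.mem_range.mpr h12) (by simp) ?_ (fun j _ _ => Nat.zero_le _)
  have hlt : k1 < (bs.map List.length).length := by simpa using hk1
  rw [List.getD_eq_getElem _ _ hlt]
  have : bs[k1] ∈ bs := List.getElem_mem _
  simpa using List.length_pos_iff.mpr (hne _ this)

/-- prefix sums of a descending list of naturals are at least proportional -/
lemma sorted_prefix_sum (l : List ℕ) (hs : List.Pairwise (· ≥ ·) l) {k : ℕ} (hk : k < l.length) :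
    k * l.sum ≤ l.length * ∑ j ∈ Finset.range k, l.getD j 0 := by
  set m := l.getD k 0 with hm
  have hget := List.pairwise_iff_get.mp hs
  have h1 : ∀ j ∈ Finset.range k, m ≤ l.getD j 0 := by
    intro j hj
    rw [Finset.mem_range] at hj
    have hjl : j < l.length := lt_trans hj hk
    rw [hm, List.getD_eq_getElem _ _ hk, List.getD_eq_getElem _ _ hjl]
    exact hget ⟨j, hjl⟩ ⟨k, hk⟩ hj
  have h2 : ∀ j ∈ Finset.Ico k l.length, l.getD j 0 ≤ m := by
    intro j hj
    rw [Finset.mem_Ico] at hj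
    rw [hm, List.getD_eq_getElem _ _ hk, List.getD_eq_getElem _ _ hj.2]
    rcases eq_or_lt_of_le hj.1 with h | h
    · subst h; exact le_refl _
    · exact hget ⟨k, hk⟩ ⟨j, hj.2⟩ h
  have s1 : k * m ≤ ∑ j ∈ Finset.range k, l.getD j 0 := by
    have := Finset.card_nsmul_le_sum (Finset.range k) (fun j => l.getD j 0) m h1
    simpa [mul_comm] using this
  have s2 : ∑ j ∈ Finset.Ico k l.length, l.getD j 0 ≤ (l.length - k) * m := by
    have := Finset.sum_le_card_nsmul (Finset.Ico k l.length) (fun j => l.getD j 0) m h2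
    simpa [Nat.card_Ico] using this
  have tot : ∑ j ∈ Finset.range k, l.getD j 0 + ∑ j ∈ Finset.Ico k l.length, l.getD j 0
      = l.sum := by
    rw [Finset.range_eq_Ico, Finset.sum_Ico_consecutive _ (Nat.zero_le k) hk.le,
      ← Finset.range_eq_Ico, sum_getD]
  set S1 := ∑ j ∈ Finset.range k, l.getD j 0
  set S2 := ∑ j ∈ Finset.Ico k l.length, l.getD j 0
  have hlen : k ≤ l.length := hk.le
  calc k * l.sum = k * S1 + k * S2 := by rw [← tot]; ring
    _ ≤ k * S1 + k * ((l.length - k) * m) := by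
        have := Nat.mul_le_mul_left k s2; omega
    _ = k * S1 + (l.length - k) * (k * m) := by ring
    _ ≤ k * S1 + (l.length - k) * S1 := by
        have := Nat.mul_le_mul_left (l.length - k) s1; omega
    _ = (k + (l.length - k)) * S1 := by ring
    _ = l.length * S1 := by congr 1; omega

lemma blocks_structure {V : Type*} (H : SimpleGraph V) (bs : List (List V))
    (hg : ∀ b ∈ bs, GoodIdx H b) :
    ∀ i, i < bs.flatten.length → (∃ k, k < bs.length ∧ qsum bs k = i) ∨
      ∃ j, j < i ∧ ∃ u w, bs.flatten[j]? = some u ∧ bs.flatten[i]? = some w ∧ H.Adj u w := by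
  induction bs with
  | nil => intro i hi; simp at hi
  | cons b bs ih =>
    intro i hi
    have hflat : (b :: bs).flatten = b ++ bs.flatten := rfl
    rw [hflat, List.length_append] at hi
    rcases lt_or_ge i b.length with hlt | hge
    · rcases Nat.eq_zero_or_pos i with h0 | h0
      · subst h0
        exact Or.inl ⟨0, by simp, qsum_zero _⟩
      · obtain ⟨j, hj, u, w, h1, h2, h3⟩ := hg b (by simp) i h0 hlt
        refine Or.inr ⟨j, hj, u, w, ?_, ?_, h3⟩
        · rw [hflat, List.getElem?_append_left (lt_trans hj hlt)]; exact h1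
        · rw [hflat, List.getElem?_append_left hlt]; exact h2
    · have hi' : i - b.length < bs.flatten.length := by omega
      rcases ih (fun b' hb' => hg b' (by simp [hb'])) (i - b.length) hi' with ⟨k, hk, hq⟩ | ⟨j, hj, u, w, h1, h2, h3⟩
      · refine Or.inl ⟨k + 1, by simpa using hk, ?_⟩
        rw [qsum_cons, hq]; omega
      · refine Or.inr ⟨b.length + j, by omega, u, w, ?_, ?_, h3⟩
        · rw [hflat, List.getElem?_append_right (by omega)]
          simpa using h1
        · rw [hflat, List.getElem?_append_right (by omega)]
          have : i - b.length = b.length + (i - b.length) - b.length := by omega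
          simpa using h2
  
end Qsum

section ExploreMain
variable {V : Type*} [Fintype V] [DecidableEq V]

lemma exists_explore (H : SimpleGraph V) :
    ∃ (L : List V) (q : ℕ → ℕ),
      L.Nodup ∧ (∀ v, v ∈ L ↔ v ∈ H.support) ∧
      (∀ k1 k2, k1 < k2 → k2 ≤ (nontrivialComponents H).ncard → q k1 < q k2) ∧
      q (nontrivialComponents H).ncard = L.length ∧
      (∀ k, k < (nontrivialComponents H).ncard →
        k * L.length ≤ (nontrivialComponents H).ncard * q k) ∧
      (∀ i, i < L.length → (∃ k, k < (nontrivialComponents H).ncard ∧ q k = i) ∨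
        ∃ j, j < i ∧ ∃ u w, L[j]? = some u ∧ L[i]? = some w ∧ H.Adj u w) := by
  classical
  have hfin : (nontrivialComponents H).Finite := Set.toFinite _
  set g : H.ConnectedComponent → List V := fun C =>
    if h : C ∈ nontrivialComponents H then (exists_component_list H C h).choose else [] with hgdef
  have hgspec : ∀ C, C ∈ nontrivialComponents H → (g C ≠ [] ∧ (g C).Nodup ∧ GoodIdx H (g C) ∧
      ∀ v, v ∈ g C ↔ (H.connectedComponentMk v = C ∧ v ∈ H.support)) := by
    intro C h
    rw [hgdef]; simp only [dif_pos h]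
    exact (exists_component_list H C h).choose_spec
  have hgempty : ∀ C, C ∉ nontrivialComponents H → g C = [] := by
    intro C h; rw [hgdef]; simp only [dif_neg h]
  set le : H.ConnectedComponent → H.ConnectedComponent → Bool :=
    fun C C' => decide ((g C').length ≤ (g C).length) with hle
  set cl : List H.ConnectedComponent := hfin.toFinset.toList.mergeSort le with hcl
  have hperm : cl.Perm hfin.toFinset.toList := List.mergeSort_perm _ _
  have hclnd : cl.Nodup := hperm.nodup_iff.mpr (Finset.nodup_toList _)
  have hclmem : ∀ C, C ∈ cl ↔ C ∈ nontrivialComponents H := by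
    intro C
    rw [hperm.mem_iff, Finset.mem_toList, Set.Finite.mem_toFinset]
  have hcllen : cl.length = (nontrivialComponents H).ncard := by
    rw [hperm.length_eq, Finset.length_toList, Set.ncard_eq_toFinset_card _ hfin]
  have hsorted : List.Pairwise (fun C C' => (g C').length ≤ (g C).length) cl := by
    have htr : ∀ (a b c : H.ConnectedComponent), le a b = true → le b c = true → le a c = true := by
      intro a b c h1 h2
      simp only [hle, decide_eq_true_eq] at h1 h2 ⊢
      omega
    have hto : ∀ (a b : H.ConnectedComponent), (le a b || le b a) = true := by
      intro a b
      simp only [hle, Bool.or_eq_true, decide_eq_true_eq]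
      omega
    have := List.pairwise_mergeSort htr hto hfin.toFinset.toList
    rw [← hcl] at this
    exact this.imp (by intro a b h; simpa [hle] using h)
  set bs : List (List V) := cl.map g with hbs
  have hbslen : bs.length = (nontrivialComponents H).ncard := by
    rw [hbs, List.length_map, hcllen]
  have hbsne : ∀ b ∈ bs, b ≠ [] := by
    intro b hb
    rw [hbs, List.mem_map] at hb
    obtain ⟨C, hC, rfl⟩ := hb
    exact (hgspec C ((hclmem C).mp hC)).1
  have hbsgood : ∀ b ∈ bs, GoodIdx H b := by
    intro b hb
    rw [hbs, List.mem_map] at hb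
    obtain ⟨C, hC, rfl⟩ := hb
    exact (hgspec C ((hclmem C).mp hC)).2.2.1
  refine ⟨bs.flatten, qsum bs, ?_, ?_, ?_, ?_, ?_, ?_⟩
  · rw [List.nodup_flatten]
    constructor
    · intro b hb
      rw [hbs, List.mem_map] at hb
      obtain ⟨C, hC, rfl⟩ := hb
      exact (hgspec C ((hclmem C).mp hC)).2.1
    · rw [hbs]
      refine List.Pairwise.map g ?_ hclnd
      intro C C' hne v hvC hvC'
      by_cases hC : C ∈ nontrivialComponents H
      · by_cases hC' : C' ∈ nontrivialComponents H
        · have h1 := ((hgspec C hC).2.2.2 v).mp hvC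
          have h2 := ((hgspec C' hC').2.2.2 v).mp hvC'
          exact hne (h1.1 ▸ h2.1 ▸ rfl)
        · rw [hgempty C' hC'] at hvC'; exact absurd hvC' List.not_mem_nil
      · rw [hgempty C hC] at hvC; exact absurd hvC List.not_mem_nil
  · intro v
    rw [List.mem_flatten]
    constructor
    · rintro ⟨b, hb, hvb⟩
      rw [hbs, List.mem_map] at hb
      obtain ⟨C, hC, rfl⟩ := hb
      exact (((hgspec C ((hclmem C).mp hC)).2.2.2 v).mp hvb).2
    · intro hv
      have hC : H.connectedComponentMk v ∈ nontrivialComponents H := ⟨v, hv, rfl⟩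
      refine ⟨g (H.connectedComponentMk v), ?_, ?_⟩
      · rw [hbs, List.mem_map]
        exact ⟨_, (hclmem _).mpr hC, rfl⟩
      · exact ((hgspec _ hC).2.2.2 v).mpr ⟨rfl, hv⟩
  · intro k1 k2 h12 h2
    exact qsum_strict_mono bs hbsne h12 (by rwa [hbslen])
  · rw [← hbslen, qsum_length]
  · intro k hk
    have hk' : k < (bs.map List.length).length := by simpa [hbslen] using hk
    have hsort' : List.Pairwise (· ≥ ·) (bs.map List.length) := by
      rw [hbs, List.map_map]
      rw [List.pairwise_map]
      exact hsorted.imp (fun h => h)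
    have := sorted_prefix_sum (bs.map List.length) hsort' hk'
    rw [qsum]
    rw [← List.length_flatten, List.length_map, hbslen] at this
    exact this
  · intro i hi
    have := blocks_structure H bs hbsgood i hi
    rwa [hbslen] at this

end ExploreMain

section Count
variable {V : Type*} [Fintype V] [DecidableEq V]

lemma card_A_le (F H : SimpleGraph V) {d : ℕ} (hreg : IsRegularGraph F d)
    (L : List V) (q : ℕ → ℕ) {c : ℕ}
    (hnd : L.Nodup) (hcov : ∀ v, v ∈ L ↔ v ∈ H.support)
    (hmono : ∀ k1 k2, k1 < k2 → k2 ≤ c → q k1 < q k2)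
    (hqc : q c = L.length)
    (hpar : ∀ i, i < L.length → (∃ k, k < c ∧ q k = i) ∨
        ∃ j, j < i ∧ ∃ u w, L[j]? = some u ∧ L[i]? = some w ∧ H.Adj u w) :
    Nat.card {φ : H.support → V // Function.Injective φ ∧
        ∀ u v : H.support, H.Adj u.1 v.1 → F.Adj (φ u) (φ v)}
      ≤ (∏ k ∈ Finset.range c, (Fintype.card V - q k)) * d ^ (L.length - c) ∧
    L.length - c ≤ H.edgeSet.ncard := by
  classical
  set n0 := Fintype.card V with hn0
  have hvv_inj : Function.Injective L.get := List.nodup_iff_injective_get.mp hnd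
  have hvs : ∀ i : Fin L.length, L.get i ∈ H.support := fun i => (hcov _).mp (List.get_mem L i)
  set sv : Fin L.length → H.support := fun i => ⟨L.get i, hvs i⟩ with hsv
  have hsv_inj : Function.Injective sv := fun i j h => hvv_inj (congrArg Subtype.val h)
  have hkq : ∀ k, k ≤ c → k ≤ q k := by
    intro k
    induction k with
    | zero => intro _; omega
    | succ k ih =>
      intro h
      have h1 := hmono k (k + 1) (by omega) h
      have h2 := ih (by omega)
      omega
  have hcx : c ≤ L.length := hqc ▸ hkq c le_rfl
  have hqlt : ∀ k, k < c → q k < L.length := fun k hk => hqc ▸ hmono k c hk le_rfl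
  set R : Finset ℕ := (Finset.range c).image q with hR
  have hqinj : ∀ a ∈ Finset.range c, ∀ b ∈ Finset.range c, q a = q b → a = b := by
    intro a ha b hb hab
    rw [Finset.mem_range] at ha hb
    by_contra hne
    rcases lt_or_gt_of_ne hne with h | h
    · have := hmono a b h hb.le; omega
    · have := hmono b a h ha.le; omega
  have hRcard : R.card = c := by
    rw [hR, Finset.card_image_of_injOn (fun a ha b hb hab => hqinj a ha b hb hab),
      Finset.card_range]
  -- parent function
  have hpar'' : ∀ i : Fin L.length, (i : ℕ) ∉ R →
      ∃ j : Fin L.length, j < i ∧ H.Adj (L.get j) (L.get i) := by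
    intro i hiR
    rcases hpar i i.2 with ⟨k, hk, hq⟩ | ⟨j, hj, u, w, hu, hw, hadj⟩
    · exact absurd (Finset.mem_image.mpr ⟨k, Finset.mem_range.mpr hk, hq⟩) hiR
    · have hjx : j < L.length := hj.trans i.2
      refine ⟨⟨j, hjx⟩, hj, ?_⟩
      rw [List.getElem?_eq_getElem hjx] at hu
      rw [List.getElem?_eq_getElem i.2] at hw
      obtain rfl := Option.some.inj hu
      obtain rfl := Option.some.inj hw
      exact hadj
  obtain ⟨par, hparspec⟩ : ∃ p : Fin L.length → Fin L.length,
      ∀ i : Fin L.length, (i : ℕ) ∉ R → p i < i ∧ H.Adj (L.get (p i)) (L.get i) :=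
    ⟨fun i => if h : (i : ℕ) ∉ R then (hpar'' i h).choose else i,
     fun i h => by dsimp only; rw [dif_pos h]; exact (hpar'' i h).choose_spec⟩
  -- card of the root-position filter
  have hfR : (Finset.univ.filter (fun i : Fin L.length => (i : ℕ) ∈ R)).image
      (fun i : Fin L.length => (i : ℕ)) = R := by
    ext m
    simp only [Finset.mem_image, Finset.mem_filter, Finset.mem_univ, true_and]
    constructor
    · rintro ⟨i, hi, rfl⟩; exact hi
    · intro hm
      have hmx : m < L.length := by
        rw [hR, Finset.mem_image] at hm
        obtain ⟨k, hk, rfl⟩ := hm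
        exact hqlt k (Finset.mem_range.mp hk)
      exact ⟨⟨m, hmx⟩, hm, rfl⟩
  have hfRcard : (Finset.univ.filter (fun i : Fin L.length => (i : ℕ) ∈ R)).card = c := by
    have h1 : (Finset.univ.filter (fun i : Fin L.length => (i : ℕ) ∈ R)).card
        = ((Finset.univ.filter (fun i : Fin L.length => (i : ℕ) ∈ R)).image
            (fun i : Fin L.length => (i : ℕ))).card := by
      rw [Finset.card_image_of_injective _ Fin.val_injective]
    rw [h1, hfR, hRcard]
  have hfnRcard : (Finset.univ.filter (fun i : Fin L.length => ¬ (i : ℕ) ∈ R)).card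
      = L.length - c := by
    have := Finset.card_filter_add_card_filter_not
      (s := (Finset.univ : Finset (Fin L.length))) (fun i : Fin L.length => (i : ℕ) ∈ R)
    rw [hfRcard, Finset.card_univ, Fintype.card_fin] at this
    omega
  constructor
  · -- main counting bound
    set wfun : Fin L.length → ℕ := fun i => if (i : ℕ) ∈ R then n0 - (i : ℕ) else d with hwfun
    set pf : (H.support → V) → Fin L.length → Finset V := fun φ i =>
      (Finset.univ.filter (fun j : Fin L.length => j < i)).image (fun j => φ (sv j)) with hpf
    have hpf_card : ∀ (φ : H.support → V), Function.Injective φ →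
        ∀ i, (pf φ i).card = (i : ℕ) := by
      intro φ hφ i
      rw [hpf]
      rw [Finset.card_image_of_injOn (fun a _ b _ h => hsv_inj (hφ h))]
      have he : (Finset.univ.filter (fun j : Fin L.length => j < i)) = Finset.Iio i := by
        ext j; simp
      rw [he, Fin.card_Iio]
    have hpf_not_mem : ∀ (φ : H.support → V), Function.Injective φ →
        ∀ i, φ (sv i) ∉ pf φ i := by
      intro φ hφ i hmem
      rw [hpf] at hmem
      simp only [Finset.mem_image, Finset.mem_filter, Finset.mem_univ, true_and] at hmem
      obtain ⟨j, hj, hje⟩ := hmem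
      exact absurd (hsv_inj (hφ hje)) (ne_of_lt hj)
    set A := {φ : H.support → V // Function.Injective φ ∧
        ∀ u v : H.support, H.Adj u.1 v.1 → F.Adj (φ u) (φ v)} with hA
    set enc : A → ∀ i : Fin L.length, ℕ := fun a i =>
      if (i : ℕ) ∈ R then setEnc (↑(pf a.1 i) : Set V) (a.1 (sv i))
      else nbEnc F hreg (a.1 (sv (par i))) (a.1 (sv i)) with henc
    have hnb_mem : ∀ (a : A) (i : Fin L.length), (i : ℕ) ∉ R →
        a.1 (sv i) ∈ F.neighborSet (a.1 (sv (par i))) := by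
      intro a i hiR
      exact a.2.2 (sv (par i)) (sv i) (hparspec i hiR).2
    have henc_lt : ∀ (a : A) (i : Fin L.length), enc a i < wfun i := by
      intro a i
      rw [henc, hwfun]
      by_cases hiR : (i : ℕ) ∈ R
      · simp only [if_pos hiR]
        have h1 := setEnc_lt (s := (↑(pf a.1 i) : Set V)) (v := a.1 (sv i))
          (by simpa using hpf_not_mem a.1 a.2.1 i)
        rwa [Set.ncard_coe_finset, hpf_card a.1 a.2.1 i] at h1
      · simp only [if_neg hiR]
        exact nbEnc_lt hreg (hnb_mem a i hiR)
    have key : ∀ m : ℕ, ∀ (a b : A), enc a = enc b →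
        ∀ i : Fin L.length, (i : ℕ) < m → a.1 (sv i) = b.1 (sv i) := by
      intro m
      induction m with
      | zero => intro a b _ i hi; omega
      | succ m ih =>
        intro a b he i hi
        rcases Nat.lt_succ_iff_lt_or_eq.mp hi with h | h
        · exact ih a b he i h
        · have he' := congrFun he i
          rw [henc] at he'
          by_cases hiR : (i : ℕ) ∈ R
          · simp only [if_pos hiR] at he'
            have hpfeq : pf a.1 i = pf b.1 i := by
              rw [hpf]
              apply Finset.image_congr
              intro j hj
              simp only [Finset.coe_filter, Finset.mem_univ, true_and, Set.mem_setOf_eq] at hj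
              exact congrArg (fun z => z) (ih a b he j (by omega))
            rw [hpfeq] at he'
            refine setEnc_inj ?_ ?_ he'
            · rw [← hpfeq]; simpa using hpf_not_mem a.1 a.2.1 i
            · simpa using hpf_not_mem b.1 b.2.1 i
          · simp only [if_neg hiR] at he'
            have hplt : ((par i : Fin L.length) : ℕ) < m := by
              have := (hparspec i hiR).1
              omega
            have hpj : a.1 (sv (par i)) = b.1 (sv (par i)) := ih a b he (par i) hplt
            rw [hpj] at he'
            refine nbEnc_inj hreg ?_ ?_ he'
            · rw [← hpj]; exact hnb_mem a i hiR
            · exact hnb_mem b i hiR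
    have hinj : Function.Injective (fun a : A => (fun i => ⟨enc a i, henc_lt a i⟩ :
        ∀ i : Fin L.length, Fin (wfun i))) := by
      intro a b hab
      have hencEq : enc a = enc b := by
        funext i
        exact congrArg Fin.val (congrFun hab i)
      apply Subtype.ext
      funext u
      obtain ⟨i, hig⟩ := List.mem_iff_get.mp ((hcov u.1).mpr u.2)
      have hsvu : sv i = u := Subtype.ext hig
      rw [← hsvu]
      exact key L.length a b hencEq i i.2
    have hle := Nat.card_le_card_of_injective _ hinj
    have hcardPi : Nat.card (∀ i : Fin L.length, Fin (wfun i)) = ∏ i : Fin L.length, wfun i := by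
      rw [Nat.card_pi]
      congr 1
      funext i
      rw [Nat.card_eq_fintype_card, Fintype.card_fin]
    have hsplit : ∏ i : Fin L.length, wfun i
        = (∏ k ∈ Finset.range c, (n0 - q k)) * d ^ (L.length - c) := by
      rw [hwfun]
      rw [Finset.prod_ite (fun i : Fin L.length => n0 - (i : ℕ)) (fun _ => d)]
      congr 1
      · have e1 : ∏ i ∈ Finset.univ.filter (fun i : Fin L.length => (i : ℕ) ∈ R), (n0 - (i : ℕ))
            = ∏ m ∈ (Finset.univ.filter (fun i : Fin L.length => (i : ℕ) ∈ R)).image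
                (fun i : Fin L.length => (i : ℕ)), (n0 - m) :=
          (Finset.prod_image (fun a _ b _ h => Fin.val_injective h)).symm
        rw [e1, hfR, hR, Finset.prod_image (fun a ha b hb h => hqinj a ha b hb h)]
      · rw [Finset.prod_const, hfnRcard]
    rw [hcardPi, hsplit] at hle
    exact hle
  · -- edge count lower bound
    rw [← Nat.card_coe_set_eq]
    have hinj2 : Function.Injective (fun i : {i : Fin L.length // (i : ℕ) ∉ R} =>
        (⟨s(L.get (par i.1), L.get i.1), (hparspec i.1 i.2).2⟩ : H.edgeSet)) := by
      intro i1 i2 h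
      have h2 := congrArg Subtype.val h
      simp only [Sym2.eq, Sym2.rel_iff', Prod.mk.injEq, Prod.swap_prod_mk] at h2
      rcases h2 with ⟨ha, hb⟩ | ⟨ha, hb⟩
      · exact Subtype.ext (hvv_inj hb)
      · have e1 : par i1.1 = i2.1 := hvv_inj ha
        have e2 : i1.1 = par i2.1 := hvv_inj hb
        have l1 := (hparspec i1.1 i1.2).1
        have l2 := (hparspec i2.1 i2.2).1
        rw [e1] at l1
        rw [← e2] at l2
        exact absurd (l1.trans l2) (lt_irrefl _)
    have hle2 := Nat.card_le_card_of_injective _ hinj2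
    have hcard2 : Nat.card {i : Fin L.length // (i : ℕ) ∉ R} = L.length - c := by
      rw [Nat.card_eq_fintype_card, Fintype.card_subtype, hfnRcard]
    rw [hcard2] at hle2
    exact hle2

end Count

section Reduce
variable {V : Type*} [Fintype V] [DecidableEq V]

lemma copies_mul_aut_le (F H : SimpleGraph V) :
    ({F' : SimpleGraph V | Nonempty (F ≃g F') ∧ H ≤ F'}).ncard * Nat.card (F ≃g F)
      ≤ Nat.card {τ : Equiv.Perm V // ∀ u v : V, H.Adj u v → F.Adj (τ u) (τ v)} := by
  classical
  rw [← Nat.card_coe_set_eq, ← Nat.card_prod]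
  set S := {F' : SimpleGraph V | Nonempty (F ≃g F') ∧ H ≤ F'} with hS
  have hiso : ∀ s : S, Nonempty (F ≃g s.1) := fun s => s.2.1
  have hprop : ∀ (s : S) (α : F ≃g F) (u v : V), H.Adj u v →
      F.Adj ((α.trans (hiso s).some).symm.toEquiv u) ((α.trans (hiso s).some).symm.toEquiv v) := by
    intro s α u v huv
    have h1 : s.1.Adj u v := s.2.2 huv
    exact ((α.trans (hiso s).some).symm.map_rel_iff).mpr h1
  apply Nat.card_le_card_of_injective
    (fun p : S × (F ≃g F) =>
      (⟨(p.2.trans (hiso p.1).some).symm.toEquiv, hprop p.1 p.2⟩ :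
        {τ : Equiv.Perm V // ∀ u v : V, H.Adj u v → F.Adj (τ u) (τ v)}))
  rintro ⟨s1, α1⟩ ⟨s2, α2⟩ hpe
  have hτ : (α1.trans (hiso s1).some).symm.toEquiv = (α2.trans (hiso s2).some).symm.toEquiv :=
    congrArg Subtype.val hpe
  have hτ' : ∀ v, (α1.trans (hiso s1).some).symm v = (α2.trans (hiso s2).some).symm v := by
    intro v
    exact congrFun (congrArg (fun (e : Equiv _ _) => (e : V → V)) hτ) v
  have hfwd : ∀ v, (α1.trans (hiso s1).some) v = (α2.trans (hiso s2).some) v := by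
    intro v
    have h1 := hτ' ((α1.trans (hiso s1).some) v)
    rw [RelIso.symm_apply_apply] at h1
    have := congrArg (α2.trans (hiso s2).some) h1
    rw [RelIso.apply_symm_apply] at this
    exact this.symm
  have hF' : s1.1 = s2.1 := by
    ext u v
    have c1 : s1.1.Adj u v ↔ F.Adj ((α1.trans (hiso s1).some).symm u)
        ((α1.trans (hiso s1).some).symm v) := ((α1.trans (hiso s1).some).symm.map_rel_iff).symm
    have c2 : s2.1.Adj u v ↔ F.Adj ((α2.trans (hiso s2).some).symm u)
        ((α2.trans (hiso s2).some).symm v) := ((α2.trans (hiso s2).some).symm.map_rel_iff).symm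
    rw [c1, c2, hτ' u, hτ' v]
  have hs : s1 = s2 := Subtype.ext hF'
  subst hs
  have hα : α1 = α2 := by
    have hv : ∀ v, α1 v = α2 v := by
      intro v
      have h := hfwd v
      rw [RelIso.trans_apply, RelIso.trans_apply] at h
      exact (hiso s1).some.injective h
    exact DFunLike.ext _ _ hv
  rw [hα]

lemma card_T_le (F H : SimpleGraph V) :
    Nat.card {τ : Equiv.Perm V // ∀ u v : V, H.Adj u v → F.Adj (τ u) (τ v)}
      ≤ Nat.card {φ : H.support → V // Function.Injective φ ∧
          ∀ u v : H.support, H.Adj u.1 v.1 → F.Adj (φ u) (φ v)} *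
        (Fintype.card V - H.support.ncard).factorial := by
  classical
  set n0 := Fintype.card V with hn0
  set x := H.support.ncard with hx
  have hB : Nat.card ((H.supportᶜ : Set V) ↪ Fin (n0 - x)) = (n0 - x).factorial := by
    haveI : Fintype ↥(H.supportᶜ : Set V) := Fintype.ofFinite _
    rw [Nat.card_eq_fintype_card, Fintype.card_embedding_eq, Fintype.card_fin]
    have hcc : Fintype.card ↥(H.supportᶜ : Set V) = n0 - x := by
      rw [← Nat.card_eq_fintype_card, Nat.card_coe_set_eq, ncard_compl_set]
    rw [hcc, Nat.descFactorial_self]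
  rw [← hB, ← Nat.card_prod]
  set T := {τ : Equiv.Perm V // ∀ u v : V, H.Adj u v → F.Adj (τ u) (τ v)} with hT
  set A := {φ : H.support → V // Function.Injective φ ∧
      ∀ u v : H.support, H.Adj u.1 v.1 → F.Adj (φ u) (φ v)} with hA
  have hφinj : ∀ t : T, Function.Injective (fun u : H.support => t.1 u.1) := by
    intro t u1 u2 h
    exact Subtype.ext (t.1.injective h)
  have hrange : ∀ (t : T) (u : (H.supportᶜ : Set V)),
      t.1 u.1 ∉ Set.range (fun w : H.support => t.1 w.1) := by
    rintro t u ⟨w, hw⟩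
    have h1 : (w : V) = u := t.1.injective hw
    exact u.2 (h1 ▸ w.2)
  have hrancard : ∀ t : T, (Set.range (fun w : H.support => t.1 w.1)).ncard = x := by
    intro t
    rw [← Nat.card_coe_set_eq]
    rw [Nat.card_congr (Equiv.ofInjective _ (hφinj t)).symm]
    rw [Nat.card_coe_set_eq]
  have henc_lt : ∀ (t : T) (u : (H.supportᶜ : Set V)),
      setEnc (Set.range (fun w : H.support => t.1 w.1)) (t.1 u.1) < n0 - x := by
    intro t u
    have := setEnc_lt (hrange t u)
    rwa [hrancard t] at this
  apply Nat.card_le_card_of_injective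
    (fun t : T =>
      ((⟨fun u : H.support => t.1 u.1, hφinj t, fun u v h => t.2 u.1 v.1 h⟩ : A),
       (⟨fun u => ⟨setEnc (Set.range (fun w : H.support => t.1 w.1)) (t.1 u.1), henc_lt t u⟩,
         by
           intro u1 u2 h
           have h2 := congrArg Fin.val h
           have h3 := setEnc_inj (hrange t u1) (hrange t u2) h2
           exact Subtype.ext (t.1.injective h3)⟩ :
         (H.supportᶜ : Set V) ↪ Fin (n0 - x))))
  intro t1 t2 hpe
  have hA12 := congrArg Prod.fst hpe
  have hB12 := congrArg Prod.snd hpe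
  have hφeq : (fun u : H.support => t1.1 u.1) = (fun u : H.support => t2.1 u.1) :=
    congrArg Subtype.val hA12
  apply Subtype.ext
  apply Equiv.ext
  intro v
  by_cases hv : v ∈ H.support
  · exact congrFun hφeq ⟨v, hv⟩
  · have hB3 := congrArg (fun (g : (H.supportᶜ : Set V) ↪ Fin (n0 - x)) =>
      (g ⟨v, hv⟩ : Fin (n0 - x)).val) hB12
    have hB3' : setEnc (Set.range (fun w : H.support => t1.1 w.1)) (t1.1 v)
        = setEnc (Set.range (fun w : H.support => t2.1 w.1)) (t2.1 v) := hB3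
    rw [hφeq] at hB3'
    have hr1 : t1.1 v ∉ Set.range (fun w : H.support => t2.1 w.1) := by
      rw [← hφeq]; exact hrange t1 ⟨v, hv⟩
    exact setEnc_inj hr1 (hrange t2 ⟨v, hv⟩) hB3'

lemma ncomp_le_nsupport (H : SimpleGraph V) :
    (nontrivialComponents H).ncard ≤ H.support.ncard := by
  classical
  rw [← Nat.card_coe_set_eq, ← Nat.card_coe_set_eq]
  have hch : ∀ C : nontrivialComponents H, ∃ v, v ∈ H.support ∧
      H.connectedComponentMk v = C.1 := fun C => C.2
  choose f hf1 hf2 using hch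
  apply Nat.card_le_card_of_injective (fun C => (⟨f C, hf1 C⟩ : H.support))
  intro C1 C2 h
  have hfe : f C1 = f C2 := congrArg Subtype.val h
  apply Subtype.ext
  rw [← hf2 C1, ← hf2 C2, hfe]

lemma factorial_mul_prod (m : ℕ) (c : ℕ) :
    m.factorial * ∏ k ∈ Finset.range c, (m + k + 1) = (m + c).factorial := by
  induction c with
  | zero => simp
  | succ c ih =>
    rw [Finset.prod_range_succ, ← mul_assoc, ih]
    rw [show m + (c + 1) = (m + c) + 1 from rfl, Nat.factorial_succ]
    ring

end Reduce

/-- Given a `d`-regular graph `F` on `[n]` and a subgraph `H ⊆ F` with `ℓ` edges,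
`x` non-isolated vertices, and `c` components (excluding isolated vertices), the number
of isomorphic copies `F'` of `F` on `[n]` with `H ⊆ F'` is at most
`(n - x + c)! ⬝ (x/c)^c ⬝ d^ℓ / |Aut(F)|`. -/
theorem count_extensions_to_copies {n d : ℕ} (F : SimpleGraph (Fin n))
    (hreg : IsRegularGraph F d) (H : SimpleGraph (Fin n)) (hHF : H ≤ F)
    (ℓ x c : ℕ) (hl : H.edgeSet.ncard = ℓ) (hx : H.support.ncard = x)
    (hc : (nontrivialComponents H).ncard = c) :
    ({F' : SimpleGraph (Fin n) | Nonempty (F ≃g F') ∧ H ≤ F'}.ncard : ℝ)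
      ≤ ((n - x + c).factorial : ℝ) * ((x : ℝ) / c) ^ c * (d : ℝ) ^ ℓ /
        (Nat.card (F ≃g F) : ℝ) := by
  classical
  haveI hfinAut : Finite (F ≃g F) :=
    Finite.of_injective (fun e => (e : Fin n ≃ Fin n))
      (fun a b h => DFunLike.ext a b (fun v =>
        congrFun (congrArg (fun (e : Fin n ≃ Fin n) => (e : Fin n → Fin n)) h) v))
  have hAutpos : 0 < Nat.card (F ≃g F) := @Nat.card_pos _ ⟨RelIso.refl _⟩ _
  rw [le_div_iff₀ (by exact_mod_cast hAutpos)]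
  obtain ⟨L, q, hnd, hcov, hmono, hqc, hpre, hpar⟩ := exists_explore H
  rw [hc] at hmono hqc hpre hpar
  have hxL : L.length = x := by
    have h1 : H.support = ↑L.toFinset := by ext v; simp [← hcov]
    rw [← hx, h1, Set.ncard_coe_finset, List.toFinset_card_of_nodup hnd]
  obtain ⟨hcount, hedge⟩ := card_A_le F H hreg L q hnd hcov hmono hqc hpar
  rw [hxL, hl] at hedge
  rw [hxL, Fintype.card_fin] at hcount
  rw [hxL] at hpre
  have hqcx : q c = x := by rw [hqc, hxL]
  have hT := card_T_le F H
  rw [hx, Fintype.card_fin] at hT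
  have hS := copies_mul_aut_le F H
  have hxn : x ≤ n := by
    rw [← hx]
    have h2 := Set.ncard_le_ncard (Set.subset_univ H.support) (Set.toFinite _)
    rwa [Set.ncard_univ, Nat.card_eq_fintype_card, Fintype.card_fin] at h2
  have hcx : c ≤ x := by rw [← hc, ← hx]; exact ncomp_le_nsupport H
  have hqlt : ∀ k, k < c → q k < x ∧ k * x ≤ c * q k :=
    fun k hk => ⟨hqcx ▸ hmono k c hk le_rfl, hpre k hk⟩
  have hdpow : d ^ (x - c) ≤ d ^ ℓ := by
    rcases Nat.eq_zero_or_pos d with rfl | hd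
    · have hFbot : F = ⊥ := by
        ext u v
        simp only [SimpleGraph.bot_adj, iff_false]
        intro hadj
        have h0 := hreg u
        rw [Set.ncard_eq_zero (Set.toFinite _)] at h0
        have hmem : v ∈ F.neighborSet u := hadj
        rw [h0] at hmem
        exact hmem
      have hHbot : H = ⊥ := le_bot_iff.mp (hFbot ▸ hHF)
      have hsupbot : (⊥ : SimpleGraph (Fin n)).support = ∅ := by
        ext v; simp [SimpleGraph.mem_support]
      have hx0 : x = 0 := by rw [← hx, hHbot, hsupbot, Set.ncard_empty]
      have hl0 : ℓ = 0 := by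
        rw [← hl, hHbot, SimpleGraph.edgeSet_bot, Set.ncard_empty]
      have hc0 : c = 0 := by clear * - hx0 hcx; omega
      rw [hx0, hc0, hl0]
    · exact Nat.pow_le_pow_right hd hedge
  have chain1 := le_trans (le_trans hS hT) (Nat.mul_le_mul_right _ hcount)
  have chainR := (Nat.cast_le (α := ℝ)).mpr chain1
  push_cast at chainR
  refine chainR.trans ?_
  have hprodR : (∏ k ∈ Finset.range c, ((n - q k : ℕ) : ℝ))
      ≤ ((x : ℝ) / c) ^ c * ∏ k ∈ Finset.range c, ((n - x + k + 1 : ℕ) : ℝ) := by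
    calc (∏ k ∈ Finset.range c, ((n - q k : ℕ) : ℝ))
        ≤ ∏ k ∈ Finset.range c, ((x : ℝ) / c * ((n - x + (c - 1 - k) + 1 : ℕ) : ℝ)) := by
          apply Finset.prod_le_prod
          · intro k _; positivity
          · intro k hk
            rw [Finset.mem_range] at hk
            have h1 := (hqlt k hk).1
            have h2 := (hqlt k hk).2
            have hc0 : 0 < c := by clear * - hk; omega
            have heq : n - x + (c - 1 - k) + 1 = (n - x) + (c - k) := by clear * - hk; omega
            rw [heq]
            rw [Nat.cast_sub (show q k ≤ n by clear * - h1 hxn; omega)]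
            rw [Nat.cast_add, Nat.cast_sub hxn, Nat.cast_sub (show k ≤ c by clear * - hk; omega)]
            rw [div_mul_eq_mul_div, le_div_iff₀ (by exact_mod_cast hc0)]
            have hxcR : (c : ℝ) ≤ x := by exact_mod_cast hcx
            have hxnR : (x : ℝ) ≤ n := by exact_mod_cast hxn
            have h2R : (k : ℝ) * x ≤ c * q k := by exact_mod_cast h2
            nlinarith [mul_nonneg (sub_nonneg.mpr hxcR) (sub_nonneg.mpr hxnR)]
      _ = ((x : ℝ) / c) ^ c * ∏ k ∈ Finset.range c, ((n - x + (c - 1 - k) + 1 : ℕ) : ℝ) := by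
          rw [Finset.prod_mul_distrib, Finset.prod_const, Finset.card_range]
      _ = ((x : ℝ) / c) ^ c * ∏ k ∈ Finset.range c, ((n - x + k + 1 : ℕ) : ℝ) := by
          rw [Finset.prod_range_reflect (fun k => ((n - x + k + 1 : ℕ) : ℝ)) c]
  have hdR : (d : ℝ) ^ (x - c) ≤ (d : ℝ) ^ ℓ := by exact_mod_cast hdpow
  have hfact : ((n - x).factorial : ℝ) * ∏ k ∈ Finset.range c, ((n - x + k + 1 : ℕ) : ℝ)
      = ((n - x + c).factorial : ℝ) := by exact_mod_cast factorial_mul_prod (n - x) c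
  calc (∏ k ∈ Finset.range c, ((n - q k : ℕ) : ℝ)) * (d : ℝ) ^ (x - c) * ((n - x).factorial : ℝ)
      ≤ (((x : ℝ) / c) ^ c * ∏ k ∈ Finset.range c, ((n - x + k + 1 : ℕ) : ℝ)) * (d : ℝ) ^ ℓ
          * ((n - x).factorial : ℝ) := by
        apply mul_le_mul_of_nonneg_right _ (by positivity)
        apply mul_le_mul hprodR hdR (by positivity) (by positivity)
    _ = ((n - x + c).factorial : ℝ) * ((x : ℝ) / c) ^ c * (d : ℝ) ^ ℓ := by
        rw [← hfact]; ring
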